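/- Let Φ : I → ℝ be a convex function on an interval I of positive real numbers that is continuously differentiable on the interior of I, let T, V be bounded linear invertible operators on a complex Hilbert space H, and let 0 < m < M with [m², M²] contained in the interior of I and m‖Tx‖ ≤ ‖Vx‖ ≤ M‖Tx‖ for all x ∈ H. Then, writing c := (m²+M²)/2, in the operator order: ⊙_Φ(V,T) ≤ Φ(c)|T|² + Φ'(c)(|V|² − c|T|²) + (1/2)(M² − m²)[Φ'(M²) − Φ'(m²)]·|T|². -/

import Mathlib

open scoped InnerProductSpace

variable {H : Type*} [NormedAddCommGroup H] [InnerProductSpace ℂ H] [CompleteSpace H]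

/-- `X = |VT⁻¹|² = (T*)⁻¹ V* V T⁻¹`. -/
noncomputable def qX (V T : (H →L[ℂ] H)ˣ) : H →L[ℂ] H :=
  star (↑(T⁻¹) : H →L[ℂ] H) * (star (V : H →L[ℂ] H) * (V : H →L[ℂ] H)) * (↑(T⁻¹) : H →L[ℂ] H)

/-- The quadratic operator perspective `⊙_Φ(V,T) = T* Φ(X) T`. -/
noncomputable def qPersp (Φ : ℝ → ℝ) (V T : (H →L[ℂ] H)ˣ) : H →L[ℂ] H :=
  star (T : H →L[ℂ] H) * cfc Φ (qX V T) * (T : H →L[ℂ] H)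

/-- `|T|² = T*T`. -/
noncomputable def modSq (T : (H →L[ℂ] H)ˣ) : H →L[ℂ] H :=
  star (T : H →L[ℂ] H) * (T : H →L[ℂ] H)

/-- Scalar key inequality for convex differentiable functions. -/
lemma scalar_key_aux9 {I : Set ℝ} {Φ Φ' : ℝ → ℝ} (hΦ : ConvexOn ℝ I Φ)
    (hΦ' : ∀ s ∈ interior I, HasDerivAt Φ (Φ' s) s)
    {a b : ℝ} (hab : a < b) (hsub : Set.Icc a b ⊆ interior I)
    {c : ℝ} (hc : c = (a + b) / 2) {t : ℝ} (ht : t ∈ Set.Icc a b) :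
    Φ t ≤ Φ c + Φ' c * (t - c) + (1/2) * (b - a) * (Φ' b - Φ' a) := by
  have hK : ConvexOn ℝ (Set.Icc a b) Φ :=
    hΦ.subset (hsub.trans interior_subset) (convex_Icc a b)
  have hcmem : c ∈ Set.Icc a b := by constructor <;> (rw [hc]; linarith)
  have mono : ∀ x ∈ Set.Icc a b, ∀ y ∈ Set.Icc a b, x ≤ y → Φ' x ≤ Φ' y := by
    intro x hx y hy hxy
    rcases eq_or_lt_of_le hxy with rfl | h
    · exact le_refl _
    · exact (hK.le_slope_of_hasDerivAt hx hy h (hΦ' x (hsub hx))).trans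
        (hK.slope_le_of_hasDerivAt hx hy h (hΦ' y (hsub hy)))
  have h1 : Φ' a ≤ Φ' c := mono a (Set.left_mem_Icc.2 hab.le) c hcmem (by rw [hc]; linarith)
  have h2 : Φ' c ≤ Φ' b := mono c hcmem b (Set.right_mem_Icc.2 hab.le) (by rw [hc]; linarith)
  rcases lt_trichotomy t c with h | rfl | h
  · have hs : Φ' t ≤ slope Φ t c := hK.le_slope_of_hasDerivAt ht hcmem h (hΦ' t (hsub ht))
    rw [slope_def_field] at hs
    have hat : Φ' a ≤ Φ' t := mono a (Set.left_mem_Icc.2 hab.le) t ht ht.1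
    have hs' : Φ' a * (c - t) ≤ Φ c - Φ t := by
      have := (le_div_iff₀ (by linarith)).mp (hat.trans hs)
      linarith
    have htc : c - t ≤ c - a := by linarith [ht.1]
    nlinarith [mul_le_mul (sub_le_sub h2 (le_refl (Φ' a))) htc (by linarith) (by linarith)]
  · nlinarith [sub_nonneg.2 (h1.trans h2)]
  · have hs : slope Φ c t ≤ Φ' t := hK.slope_le_of_hasDerivAt hcmem ht h (hΦ' t (hsub ht))
    rw [slope_def_field] at hs
    have htb : Φ' t ≤ Φ' b := mono t ht b (Set.right_mem_Icc.2 hab.le) ht.2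
    have hs' : Φ t - Φ c ≤ Φ' b * (t - c) := by
      have := (div_le_iff₀ (by linarith)).mp (hs.trans htb)
      linarith
    have htc : t - c ≤ b - c := by linarith [ht.2]
    nlinarith [mul_le_mul (sub_le_sub (le_refl (Φ' b)) h1) htc (by linarith) (by linarith)]

lemma qX_sa (V T : (H →L[ℂ] H)ˣ) : IsSelfAdjoint (qX V T) := by
  have : qX V T = star ((V : H →L[ℂ] H) * ↑(T⁻¹)) * ((V : H →L[ℂ] H) * ↑(T⁻¹)) := by
    simp [qX, star_mul]; noncomm_ring
  rw [this]; exact IsSelfAdjoint.star_mul_self _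

lemma re_inner_qX (V T : (H →L[ℂ] H)ˣ) (y : H) :
    RCLike.re (⟪qX V T y, y⟫_ℂ) = ‖(V : H →L[ℂ] H) ((↑(T⁻¹) : H →L[ℂ] H) y)‖ ^ 2 := by
  have : qX V T = star ((V : H →L[ℂ] H) * ↑(T⁻¹)) * ((V : H →L[ℂ] H) * ↑(T⁻¹)) := by
    simp [qX, star_mul]; noncomm_ring
  rw [this]
  simp only [ContinuousLinearMap.mul_apply, ContinuousLinearMap.star_eq_adjoint,
    ContinuousLinearMap.adjoint_inner_left]
  rw [inner_self_eq_norm_sq]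

lemma re_inner_algebraMap (r : ℝ) (y : H) :
    RCLike.re (⟪(algebraMap ℝ (H →L[ℂ] H) r) y, y⟫_ℂ) = r * ‖y‖ ^ 2 := by
  rw [Algebra.algebraMap_eq_smul_one]
  simp only [ContinuousLinearMap.smul_apply, ContinuousLinearMap.one_apply]
  rw [RCLike.real_smul_eq_coe_smul (K := ℂ), inner_smul_left]
  simp [inner_self_eq_norm_sq_to_K, ← Complex.ofReal_pow]

lemma algebraMap_le_qX (V T : (H →L[ℂ] H)ˣ) (m : ℝ) (hm : 0 ≤ m)
    (h : ∀ x : H, m * ‖(T : H →L[ℂ] H) x‖ ≤ ‖(V : H →L[ℂ] H) x‖) :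
    algebraMap ℝ (H →L[ℂ] H) (m ^ 2) ≤ qX V T := by
  rw [ContinuousLinearMap.le_def]
  refine ⟨ContinuousLinearMap.isSelfAdjoint_iff_isSymmetric.mp ((qX_sa V T).sub ((IsSelfAdjoint.all _).algebraMap _)), fun y => ?_⟩
  rw [ContinuousLinearMap.reApplyInnerSelf_apply]
  have hTy : (T : H →L[ℂ] H) ((↑(T⁻¹) : H →L[ℂ] H) y) = y := by
    simp [← ContinuousLinearMap.mul_apply, ← Units.val_mul]
  have hb := h ((↑(T⁻¹) : H →L[ℂ] H) y)
  rw [hTy] at hb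
  rw [ContinuousLinearMap.sub_apply, inner_sub_left, map_sub, re_inner_algebraMap, re_inner_qX]
  have := pow_le_pow_left₀ (by positivity) hb 2
  nlinarith [this]

lemma qX_le_algebraMap (V T : (H →L[ℂ] H)ˣ) (M : ℝ)
    (h : ∀ x : H, ‖(V : H →L[ℂ] H) x‖ ≤ M * ‖(T : H →L[ℂ] H) x‖) :
    qX V T ≤ algebraMap ℝ (H →L[ℂ] H) (M ^ 2) := by
  rw [ContinuousLinearMap.le_def]
  refine ⟨ContinuousLinearMap.isSelfAdjoint_iff_isSymmetric.mp (((IsSelfAdjoint.all _).algebraMap _).sub (qX_sa V T)), fun y => ?_⟩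
  rw [ContinuousLinearMap.reApplyInnerSelf_apply]
  have hTy : (T : H →L[ℂ] H) ((↑(T⁻¹) : H →L[ℂ] H) y) = y := by
    simp [← ContinuousLinearMap.mul_apply, ← Units.val_mul]
  have hb := h ((↑(T⁻¹) : H →L[ℂ] H) y)
  rw [hTy] at hb
  rw [ContinuousLinearMap.sub_apply, inner_sub_left, map_sub, re_inner_algebraMap, re_inner_qX]
  have := pow_le_pow_left₀ (norm_nonneg _) hb 2
  nlinarith [this, norm_nonneg ((V : H →L[ℂ] H) ((↑(T⁻¹) : H →L[ℂ] H) y))]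

theorem stmt9 (I : Set ℝ) (hIpos : I ⊆ Set.Ioi 0)
    (Φ Φ' : ℝ → ℝ) (hΦ : ConvexOn ℝ I Φ)
    (hΦ' : ∀ s ∈ interior I, HasDerivAt Φ (Φ' s) s)
    (hΦ'c : ContinuousOn Φ' (interior I))
    (T V : (H →L[ℂ] H)ˣ) (m M : ℝ) (hm : 0 < m) (hmM : m < M)
    (hsub : Set.Icc (m ^ 2) (M ^ 2) ⊆ interior I)
    (hTV : ∀ x : H, m * ‖(T : H →L[ℂ] H) x‖ ≤ ‖(V : H →L[ℂ] H) x‖ ∧ ‖(V : H →L[ℂ] H) x‖ ≤ M * ‖(T : H →L[ℂ] H) x‖)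
    (c : ℝ) (hc : c = (m ^ 2 + M ^ 2) / 2) :
    qPersp Φ V T ≤
      Φ c • modSq T + Φ' c • (modSq V - c • modSq T) +
        ((1 / 2) * (M ^ 2 - m ^ 2) * (Φ' (M ^ 2) - Φ' (m ^ 2))) • modSq T := by
  have hsa : IsSelfAdjoint (qX V T) := qX_sa V T
  have hm2M2 : m ^ 2 < M ^ 2 := by nlinarith
  have hlow := algebraMap_le_qX V T m hm.le fun x => (hTV x).1
  have hhigh := qX_le_algebraMap V T M fun x => (hTV x).2
  have hspec : spectrum ℝ (qX V T) ⊆ Set.Icc (m ^ 2) (M ^ 2) := fun x hx =>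
    ⟨(algebraMap_le_iff_le_spectrum (a := qX V T) hsa).mp hlow x hx,
     (le_algebraMap_iff_spectrum_le (a := qX V T) hsa).mp hhigh x hx⟩
  -- continuity of Φ on the spectrum
  have hΦcont : ContinuousOn Φ (interior I) := fun s hs =>
    ((hΦ' s hs).continuousAt).continuousWithinAt
  set K : ℝ := (1 / 2) * (M ^ 2 - m ^ 2) * (Φ' (M ^ 2) - Φ' (m ^ 2)) with hK
  set g : ℝ → ℝ := fun t => (Φ c - Φ' c * c + K) + Φ' c * t with hg
  -- cfc monotonicity
  have hmono : cfc Φ (qX V T) ≤ cfc g (qX V T) := by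
    apply cfc_mono
    · intro x hx
      have := scalar_key_aux9 hΦ hΦ' hm2M2 hsub hc (hspec hx)
      simp only [hg]
      linarith
    · exact (hΦcont.mono (hspec.trans hsub)).mono (by exact fun x hx => hx)
    · rw [hg]
      exact (continuous_const.add (continuous_const.mul continuous_id)).continuousOn
  have hgX : cfc g (qX V T) =
      algebraMap ℝ (H →L[ℂ] H) (Φ c - Φ' c * c + K) + Φ' c • qX V T := by
    rw [hg]
    rw [cfc_add (qX V T) (fun _ => (Φ c - Φ' c * c + K)) (fun t => Φ' c * t),
      cfc_const _ _, cfc_const_mul _ _ _, cfc_id' ℝ (qX V T)]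
  -- conjugation
  have hconj := star_left_conjugate_le_conjugate hmono ((T : H →L[ℂ] H))
  have hTT : star ((T : H →L[ℂ] H)) * star (↑(T⁻¹) : H →L[ℂ] H) = 1 := by
    rw [← star_mul, ← Units.val_mul]; simp
  have hTT' : (↑(T⁻¹) : H →L[ℂ] H) * (T : H →L[ℂ] H) = 1 := by
    rw [← Units.val_mul]; simp
  have hTXT : star ((T : H →L[ℂ] H)) * qX V T * (T : H →L[ℂ] H) = modSq V := by
    rw [qX, modSq,
      show star ((T : H →L[ℂ] H)) *
          (star (↑(T⁻¹) : H →L[ℂ] H) * (star (V : H →L[ℂ] H) * (V : H →L[ℂ] H)) *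
            (↑(T⁻¹) : H →L[ℂ] H)) * (T : H →L[ℂ] H) =
        (star ((T : H →L[ℂ] H)) * star (↑(T⁻¹) : H →L[ℂ] H)) *
          (star (V : H →L[ℂ] H) * (V : H →L[ℂ] H)) *
          ((↑(T⁻¹) : H →L[ℂ] H) * (T : H →L[ℂ] H)) from by noncomm_ring,
      hTT, hTT', one_mul, mul_one]
  have hfinal : star ((T : H →L[ℂ] H)) * cfc g (qX V T) * (T : H →L[ℂ] H) =
      (Φ c - Φ' c * c + K) • modSq T + Φ' c • modSq V := by
    rw [hgX, Algebra.algebraMap_eq_smul_one]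
    rw [mul_add, add_mul]
    congr 1
    · rw [modSq]
      simp only [Algebra.mul_smul_comm, Algebra.smul_mul_assoc, mul_one]
    · rw [← hTXT]
      simp only [Algebra.mul_smul_comm, Algebra.smul_mul_assoc]
  calc qPersp Φ V T ≤ star ((T : H →L[ℂ] H)) * cfc g (qX V T) * (T : H →L[ℂ] H) := hconj
    _ = (Φ c - Φ' c * c + K) • modSq T + Φ' c • modSq V := hfinal
    _ = Φ c • modSq T + Φ' c • (modSq V - c • modSq T) + K • modSq T := by
        module
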